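/- Let n be a natural number, let q, p : Fin n → ℂ with q injective, let g, ω ∈ ℂ, let Q = diag(q_1,…,q_n) and let P be the n×n matrix with P i i = p i and P i j = i·g/(q i − q j) for i ≠ j (i the imaginary unit). Then trace(P²/2 + ω²·Q²/2) = Σ_i ((p i)²/2 + ω²(q i)²/2) + Σ_{i<j} g²/(q i − q j)². -/
import Mathlib


/-- Reduced matrix harmonic oscillator Hamiltonian `Tr(P²/2 + ω²Q²/2)` with `Q = diag(q)`
and `P` the rational Calogero Lax matrix: the rational Calogero system in a harmonic well. -/
theorem trace_harmonic_oscillator_reduced (n : ℕ) (q p : Fin n → ℂ)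
    (hq : Function.Injective q) (g ω : ℂ) :
    Matrix.trace ((1 / 2 : ℂ) •
        (Matrix.of fun i j : Fin n =>
          if i = j then p i else Complex.I * g / (q i - q j)) ^ 2
      + (ω ^ 2 / 2) • (Matrix.diagonal q) ^ 2)
      = (∑ i, ((p i) ^ 2 / 2 + ω ^ 2 * (q i) ^ 2 / 2))
        + ∑ i, ∑ j, if i < j then g ^ 2 / (q i - q j) ^ 2 else 0 := by
  have hsub : ∀ i j : Fin n, i ≠ j → q i - q j ≠ 0 := fun i j h =>
    sub_ne_zero.mpr (fun h' => h (hq h'))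
  have hterm : ∀ i j : Fin n,
      (if i = j then p i else Complex.I * g / (q i - q j)) *
        (if j = i then p j else Complex.I * g / (q j - q i))
      = if i = j then p i ^ 2 else g ^ 2 / (q i - q j) ^ 2 := by
    intro i j
    by_cases h : i = j
    · subst h; simp [pow_two]
    · have hne := hsub i j h
      simp only [h, Ne.symm h, if_neg, if_false]
      have hne' : q j - q i ≠ 0 := hsub j i (Ne.symm h)
      field_simp
      ring_nf
      rw [Complex.I_sq]
      ring
  rw [Matrix.trace_add, Matrix.trace_smul, Matrix.trace_smul, Matrix.diagonal_pow,
    Matrix.trace_diagonal]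
  have htr : Matrix.trace ((Matrix.of fun i j : Fin n =>
      if i = j then p i else Complex.I * g / (q i - q j)) ^ 2)
      = ∑ i, ∑ j, (if i = j then p i ^ 2 else g ^ 2 / (q i - q j) ^ 2) := by
    rw [pow_two, Matrix.trace]
    refine Finset.sum_congr rfl fun i _ => ?_
    rw [Matrix.diag, Matrix.mul_apply]
    exact Finset.sum_congr rfl fun j _ => hterm i j
  rw [htr]
  have hsplit : ∀ i j : Fin n, (if i = j then p i ^ 2 else g ^ 2 / (q i - q j) ^ 2)
      = (if i = j then p i ^ 2 else 0)
        + (if i < j then g ^ 2 / (q i - q j) ^ 2 else 0)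
        + (if j < i then g ^ 2 / (q i - q j) ^ 2 else 0) := by
    intro i j
    rcases lt_trichotomy i j with h | h | h
    · simp [h.ne, h, h.asymm]
    · simp [h]
    · simp [h.ne', h, h.asymm]
  simp_rw [hsplit, Finset.sum_add_distrib, Finset.sum_ite_eq, Finset.mem_univ, if_true]
  have hsym : (∑ i, ∑ j, if j < i then g ^ 2 / (q i - q j) ^ 2 else 0)
      = ∑ i, ∑ j, if i < j then g ^ 2 / (q i - q j) ^ 2 else 0 := by
    rw [Finset.sum_comm]
    refine Finset.sum_congr rfl fun i _ => Finset.sum_congr rfl fun j _ => ?_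
    have : (q j - q i) ^ 2 = (q i - q j) ^ 2 := by ring
    rw [this]
  rw [hsym]
  simp only [smul_eq_mul, Pi.pow_apply]
  have h1 : ∀ i : Fin n, ω ^ 2 * q i ^ 2 / 2 = ω ^ 2 / 2 * q i ^ 2 := fun i => by ring
  simp_rw [h1, ← Finset.mul_sum, ← Finset.sum_div]
  ring
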